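/- arXiv:1810.10210 — 3 statements merged into one kernel-verified Lean document; each statement's English description precedes it below -/
import Mathlib

section
/- Let V : ℝ² → ℝ be C¹, positively homogeneous of degree 2, with V(z) > 0 for z ≠ 0. Then every nontrivial solution of Jz' = ∇V(z) is periodic with the same minimal period τ_V = ∫₀^{2π} dθ / (2V(cos θ, sin θ)). -/
open intervalIntegral Real Filter

lemma ode_solution {ζ dζ α : ℝ → ℂ} (hα : Continuous α)
    (hd : ∀ t, HasDerivAt ζ (dζ t) t) (heq : ∀ t, dζ t = α t * ζ t) (t : ℝ) :
    ζ t = ζ 0 * Complex.exp (∫ s in (0:ℝ)..t, α s) := by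
  set E : ℝ → ℂ := fun t => ∫ s in (0:ℝ)..t, α s with hE
  have hEd : ∀ u : ℝ, HasDerivAt E (α u) u := by
    intro u
    exact intervalIntegral.integral_hasDerivAt_right
      (hα.intervalIntegrable _ _)
      (hα.aestronglyMeasurable.stronglyMeasurableAtFilter)
      hα.continuousAt
  have key : ∀ t, ζ t * Complex.exp (-(E t)) = ζ 0 * Complex.exp (-(E 0)) := by
    have : ∀ t : ℝ, HasDerivAt (fun u => ζ u * Complex.exp (-(E u))) 0 t := by
      intro u
      have h1 : HasDerivAt (fun u => Complex.exp (-(E u))) (-(α u) * Complex.exp (-(E u))) u := by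
      -- derivative of exp(-E)
        have := ((hEd u).neg).cexp
        simpa [mul_comm] using this
      have := (hd u).mul h1
      exact this.congr_deriv (by rw [heq u]; ring)
    intro t
    exact is_const_of_deriv_eq_zero (f := fun u => ζ u * Complex.exp (-(E u)))
      (fun u => ((this u).differentiableAt)) (fun u => (this u).deriv) t 0
  have h := key t
  have hE0 : E 0 = 0 := by simp [hE]
  rw [hE0, neg_zero, Complex.exp_zero, mul_one] at h
  have := congrArg (fun w => w * Complex.exp (E t)) h
  simp only [mul_assoc, ← Complex.exp_add, neg_add_cancel, Complex.exp_zero, mul_one] at this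
  exact this

lemma V_zero (V : ℝ × ℝ → ℝ) (hV : Continuous V)
    (hhom : ∀ l : ℝ, 0 < l → ∀ w : ℝ × ℝ, w ≠ 0 → V (l • w) = l ^ 2 * V w) :
    V 0 = 0 := by
  have w0 : ((1:ℝ),(0:ℝ)) ≠ (0 : ℝ × ℝ) := by simp [Prod.ext_iff]
  have h1 : Filter.Tendsto (fun l : ℝ => V (l • ((1:ℝ),(0:ℝ))))
      (nhdsWithin 0 (Set.Ioi 0)) (nhds (V 0)) := by
    have : Filter.Tendsto (fun l : ℝ => l • ((1:ℝ),(0:ℝ))) (nhdsWithin 0 (Set.Ioi 0)) (nhds 0) := by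
      have hc : Continuous (fun l : ℝ => l • ((1:ℝ),(0:ℝ))) := continuous_id.smul continuous_const
      have := hc.tendsto (0:ℝ)
      simpa using this.mono_left nhdsWithin_le_nhds
    exact (hV.tendsto 0).comp this
  have h2 : Filter.Tendsto (fun l : ℝ => V (l • ((1:ℝ),(0:ℝ))))
      (nhdsWithin 0 (Set.Ioi 0)) (nhds 0) := by
    have heq : ∀ l ∈ Set.Ioi (0:ℝ), V (l • ((1:ℝ),(0:ℝ))) = l ^ 2 * V ((1:ℝ),(0:ℝ)) :=
      fun l hl => hhom l hl _ w0
    have : Filter.Tendsto (fun l : ℝ => l ^ 2 * V ((1:ℝ),(0:ℝ)))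
        (nhdsWithin 0 (Set.Ioi 0)) (nhds 0) := by
      have hc : Continuous (fun l : ℝ => l ^ 2 * V ((1:ℝ),(0:ℝ))) := (continuous_pow 2).mul continuous_const
      have := hc.tendsto (0:ℝ)
      simpa using this.mono_left nhdsWithin_le_nhds
    exact this.congr' (by filter_upwards [self_mem_nhdsWithin] with l hl using (heq l hl).symm)
  exact tendsto_nhds_unique h1 h2

lemma fderiv_apply_pair (V : ℝ × ℝ → ℝ) (w v : ℝ × ℝ) :
    fderiv ℝ V w v = v.1 * fderiv ℝ V w (1,0) + v.2 * fderiv ℝ V w (0,1) := by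
  have hv : v = v.1 • ((1:ℝ),(0:ℝ)) + v.2 • ((0:ℝ),(1:ℝ)) := by
    simp [Prod.ext_iff]
  conv_lhs => rw [hv]
  rw [map_add, map_smul, map_smul]
  simp [smul_eq_mul]

lemma euler (V : ℝ × ℝ → ℝ) (hV : ContDiff ℝ 1 V)
    (hhom : ∀ l : ℝ, 0 < l → ∀ w : ℝ × ℝ, w ≠ 0 → V (l • w) = l ^ 2 * V w)
    (w : ℝ × ℝ) (hw : w ≠ 0) :
    fderiv ℝ V w w = 2 * V w := by
  have hdV : HasFDerivAt V (fderiv ℝ V w) w :=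
    (hV.differentiable one_ne_zero w).hasFDerivAt
  have hg : HasDerivAt (fun l : ℝ => l • w) w 1 := by
    simpa using (hasDerivAt_id (1:ℝ)).smul_const w
  have hf : HasDerivAt (fun l : ℝ => V (l • w)) (fderiv ℝ V w w) 1 := by
    have hdV' : HasFDerivAt V (fderiv ℝ V w) ((1:ℝ) • w) := by simpa using hdV
    have := hdV'.comp_hasDerivAt 1 hg
    exact this
  have hf2 : HasDerivAt (fun l : ℝ => l ^ 2 * V w) (2 * V w) 1 := by
    have := ((hasDerivAt_pow 2 (1:ℝ))).mul_const (V w)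
    simpa using this
  have heq : (fun l : ℝ => V (l • w)) =ᶠ[nhds 1] fun l => l ^ 2 * V w := by
    filter_upwards [eventually_gt_nhds (by norm_num : (0:ℝ) < 1)] with l hl
    exact hhom l hl w hw
  exact hf.unique ((heq.hasDerivAt_iff).mpr hf2)

lemma ftc_cont {f : ℝ → ℝ} (hf : Continuous f) (a : ℝ) (t : ℝ) :
    HasDerivAt (fun u => ∫ s in a..u, f s) (f t) t :=
  intervalIntegral.integral_hasDerivAt_right (hf.intervalIntegrable _ _)
    hf.aestronglyMeasurable.stronglyMeasurableAtFilter hf.continuousAt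

/-- The standard symplectic matrix `J = [[0,-1],[1,0]]` acting on `ℝ²`. -/
def J2 (w : ℝ × ℝ) : ℝ × ℝ := (-w.2, w.1)

/-- The gradient of a function `V : ℝ² → ℝ`. -/
noncomputable def grad2 (V : ℝ × ℝ → ℝ) (z : ℝ × ℝ) : ℝ × ℝ :=
  (fderiv ℝ V z (1, 0), fderiv ℝ V z (0, 1))

/-- Every nontrivial solution of `Jz' = ∇V(z)` is periodic with the same minimal
period `τ_V = ∫₀^{2π} dθ / (2V(cos θ, sin θ))`. -/
theorem isochronous_center (V : ℝ × ℝ → ℝ)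
    (hV : ContDiff ℝ 1 V)
    (hhom : ∀ l : ℝ, 0 < l → ∀ w : ℝ × ℝ, w ≠ 0 → V (l • w) = l ^ 2 * V w)
    (hpos : ∀ w : ℝ × ℝ, w ≠ 0 → 0 < V w)
    (z z' : ℝ → ℝ × ℝ)
    (hz : ∀ t, HasDerivAt z (z' t) t)
    (hode : ∀ t, J2 (z' t) = grad2 V (z t))
    (hnontriv : ∃ t, z t ≠ 0) :
    Function.Periodic z (∫ θ in (0:ℝ)..(2 * Real.pi), 1 / (2 * V (Real.cos θ, Real.sin θ))) ∧
      ∀ τ : ℝ, 0 < τ → Function.Periodic z τ →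
        (∫ θ in (0:ℝ)..(2 * Real.pi), 1 / (2 * V (Real.cos θ, Real.sin θ))) ≤ τ := by
  -- shorthand for components of the ODE
  have hode1 : ∀ t, (z' t).1 = fderiv ℝ V (z t) (0,1) := by
    intro t
    have := hode t
    have := congrArg Prod.snd this
    simpa [J2, grad2] using this
  have hode2 : ∀ t, (z' t).2 = -fderiv ℝ V (z t) (1,0) := by
    intro t
    have := congrArg Prod.fst (hode t)
    simp [J2, grad2] at this
    linarith
  -- continuity of z and z'
  have hzc : Continuous z := by
    rw [continuous_iff_continuousAt]; exact fun t => (hz t).continuousAt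
  have hfderivc : Continuous (fun w => fderiv ℝ V w) := hV.continuous_fderiv one_ne_zero
  have hz'c : Continuous z' := by
    have h1 : Continuous (fun t => fderiv ℝ V (z t) (0,1)) :=
      (hfderivc.comp hzc).clm_apply continuous_const
    have h2 : Continuous (fun t => fderiv ℝ V (z t) (1,0)) :=
      (hfderivc.comp hzc).clm_apply continuous_const
    have : Continuous (fun t => ((fderiv ℝ V (z t) (0,1)), -(fderiv ℝ V (z t) (1,0)))) :=
      h1.prodMk h2.neg
    convert this using 1
    funext t
    exact Prod.ext (hode1 t) (hode2 t)
  -- conservation of energy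
  obtain ⟨t₀, ht₀⟩ := hnontriv
  set c : ℝ := V (z t₀) with hc
  have hcpos : 0 < c := hpos _ ht₀
  have hcons : ∀ t, V (z t) = c := by
    have hder : ∀ t, HasDerivAt (fun t => V (z t)) 0 t := by
      intro t
      have hdV : HasFDerivAt V (fderiv ℝ V (z t)) (z t) :=
        (hV.differentiable one_ne_zero (z t)).hasFDerivAt
      have := hdV.comp_hasDerivAt t (hz t)
      have hval : fderiv ℝ V (z t) (z' t) = 0 := by
        rw [fderiv_apply_pair, hode1 t, hode2 t]; ring
      rw [hval] at this; exact this
    intro t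
    exact is_const_of_deriv_eq_zero
      (fun u => ((hder u).differentiableAt)) (fun u => (hder u).deriv) t t₀
  have hV0 : V 0 = 0 := V_zero V hV.continuous hhom
  have hzne : ∀ t, z t ≠ 0 := by
    intro t h
    rw [← hcons t, h, hV0] at hcpos; exact lt_irrefl 0 hcpos
  -- squared radius
  set r2 : ℝ → ℝ := fun t => (z t).1 ^ 2 + (z t).2 ^ 2 with hr2
  have hr2pos : ∀ t, 0 < r2 t := by
    intro t
    have h' : (z t).1 ≠ 0 ∨ (z t).2 ≠ 0 := by
      by_contra hcon
      push_neg at hcon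
      exact hzne t (Prod.ext hcon.1 hcon.2)
    simp only [hr2]
    rcases h' with h' | h'
    · positivity
    · positivity
  -- key identity: x y' - y x' = -2c
  have hkey : ∀ t, (z t).1 * (z' t).2 - (z t).2 * (z' t).1 = -2 * c := by
    intro t
    have he := euler V hV hhom (z t) (hzne t)
    rw [fderiv_apply_pair] at he
    rw [hode1 t, hode2 t]
    rw [hcons t] at he
    ring_nf
    ring_nf at he
    linarith
  -- component derivatives
  have hxd : ∀ t, HasDerivAt (fun t => (z t).1) ((z' t).1) t := by
    intro t
    exact ((ContinuousLinearMap.fst ℝ ℝ ℝ).hasFDerivAt.comp_hasDerivAt t (hz t))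
  have hyd : ∀ t, HasDerivAt (fun t => (z t).2) ((z' t).2) t := by
    intro t
    exact ((ContinuousLinearMap.snd ℝ ℝ ℝ).hasFDerivAt.comp_hasDerivAt t (hz t))
  -- complex curve
  set ζ : ℝ → ℂ := fun t => ((z t).1 : ℂ) + ((z t).2 : ℂ) * Complex.I with hζdef
  have hζd : ∀ t, HasDerivAt ζ (((z' t).1 : ℂ) + ((z' t).2 : ℂ) * Complex.I) t := by
    intro t
    have h1 : HasDerivAt (fun t => (((z t).1 : ℝ) : ℂ)) (((z' t).1 : ℝ) : ℂ) t :=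
      Complex.ofRealCLM.hasFDerivAt.comp_hasDerivAt t (hxd t)
    have h2 : HasDerivAt (fun t => (((z t).2 : ℝ) : ℂ)) (((z' t).2 : ℝ) : ℂ) t :=
      Complex.ofRealCLM.hasFDerivAt.comp_hasDerivAt t (hyd t)
    exact h1.add (h2.mul_const Complex.I)
  -- radial and angular velocities
  set α : ℝ → ℝ := fun t => ((z t).1 * (z' t).1 + (z t).2 * (z' t).2) / r2 t with hαdef
  set β : ℝ → ℝ := fun t => (-2 * c) / r2 t with hβdef
  have hr2c : Continuous r2 := by
    simp only [hr2]
    exact (hzc.fst.pow 2).add (hzc.snd.pow 2)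
  have hαc : Continuous α := by
    simp only [hαdef]
    exact ((hzc.fst.mul hz'c.fst).add (hzc.snd.mul hz'c.snd)).div hr2c
      (fun t => (hr2pos t).ne')
  have hβc : Continuous β := by
    simp only [hβdef]
    exact continuous_const.div hr2c (fun t => (hr2pos t).ne')
  have hβ' : ∀ t, β t = ((z t).1 * (z' t).2 - (z t).2 * (z' t).1) / r2 t := by
    intro t; rw [hβdef, ← hkey t]
  -- the complex ODE
  have hmul : ∀ t, ((z' t).1 : ℂ) + ((z' t).2 : ℂ) * Complex.I
      = (((α t : ℝ) : ℂ) + ((β t : ℝ) : ℂ) * Complex.I) * ζ t := by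
    intro t
    rw [hβ' t, hαdef]
    simp only [hζdef]
    rw [Complex.ext_iff]
    constructor
    · simp only [Complex.add_re, Complex.mul_re, Complex.ofReal_re, Complex.ofReal_im,
        Complex.I_re, Complex.I_im, Complex.add_im, Complex.mul_im]
      have h0 := (hr2pos t).ne'
      field_simp
      simp only [hr2]
      ring
    · simp only [Complex.add_re, Complex.mul_re, Complex.ofReal_re, Complex.ofReal_im,
        Complex.I_re, Complex.I_im, Complex.add_im, Complex.mul_im]
      have h0 := (hr2pos t).ne'
      field_simp
      simp only [hr2]
      ring
  have hαβc : Continuous (fun t => ((α t : ℝ) : ℂ) + ((β t : ℝ) : ℂ) * Complex.I) :=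
    (Complex.continuous_ofReal.comp hαc).add
      ((Complex.continuous_ofReal.comp hβc).mul continuous_const)
  have hmain : ∀ t, ζ t = ζ 0 * Complex.exp (∫ s in (0:ℝ)..t, (((α s : ℝ) : ℂ) + ((β s : ℝ) : ℂ) * Complex.I)) :=
    ode_solution hαβc hζd hmul
  -- split the integral
  have hsplit : ∀ t, (∫ s in (0:ℝ)..t, (((α s : ℝ) : ℂ) + ((β s : ℝ) : ℂ) * Complex.I))
      = ((∫ s in (0:ℝ)..t, α s : ℝ) : ℂ) + ((∫ s in (0:ℝ)..t, β s : ℝ) : ℂ) * Complex.I := by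
    intro t
    have hIα : IntervalIntegrable (fun s => ((α s : ℝ) : ℂ)) MeasureTheory.volume 0 t :=
      (Complex.continuous_ofReal.comp hαc).intervalIntegrable _ _
    have hIβ : IntervalIntegrable (fun s => ((β s : ℝ) : ℂ) * Complex.I) MeasureTheory.volume 0 t :=
      ((Complex.continuous_ofReal.comp hβc).mul continuous_const).intervalIntegrable _ _
    rw [intervalIntegral.integral_add hIα hIβ]
    rw [intervalIntegral.integral_mul_const]
    rw [intervalIntegral.integral_ofReal, intervalIntegral.integral_ofReal]
  -- polar representation
  set A : ℝ → ℝ := fun t => Complex.arg (ζ 0) + ∫ s in (0:ℝ)..t, β s with hAdef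
  set R : ℝ → ℝ := fun t => ‖ζ 0‖ * Real.exp (∫ s in (0:ℝ)..t, α s) with hRdef
  have hζ0 : ζ 0 = ((‖ζ 0‖ : ℝ) : ℂ) * Complex.exp ((Complex.arg (ζ 0) : ℝ) * Complex.I) :=
    (Complex.norm_mul_exp_arg_mul_I _).symm
  have hpolar : ∀ t, ζ t = ((R t : ℝ) : ℂ) * Complex.exp (((A t : ℝ) : ℂ) * Complex.I) := by
    intro t
    rw [hmain t, hsplit t]
    conv_lhs => rw [hζ0]
    rw [hRdef, hAdef]
    have hcast : ((‖ζ 0‖ * Real.exp (∫ s in (0:ℝ)..t, α s) : ℝ) : ℂ)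
        = ((‖ζ 0‖ : ℝ) : ℂ) * Complex.exp ((∫ s in (0:ℝ)..t, α s : ℝ) : ℂ) := by
      push_cast [Complex.ofReal_exp]; ring
    rw [Complex.exp_add, hcast, Complex.ofReal_add, add_mul, Complex.exp_add]
    ring
  -- components in polar form
  have hx : ∀ t, (z t).1 = R t * Real.cos (A t) := by
    intro t
    have h := congrArg Complex.re (hpolar t)
    simpa only [hζdef, Complex.add_re, Complex.ofReal_re, Complex.mul_re, Complex.I_re,
      Complex.ofReal_im, Complex.I_im, Complex.exp_ofReal_mul_I_re, Complex.exp_ofReal_mul_I_im,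
      mul_zero, zero_mul, mul_one, sub_zero, add_zero, zero_sub, mul_neg, neg_zero] using h
  have hy : ∀ t, (z t).2 = R t * Real.sin (A t) := by
    intro t
    have h := congrArg Complex.im (hpolar t)
    simpa only [hζdef, Complex.add_im, Complex.ofReal_im, Complex.mul_im, Complex.I_im,
      Complex.ofReal_re, Complex.I_re, Complex.exp_ofReal_mul_I_re, Complex.exp_ofReal_mul_I_im,
      mul_zero, zero_mul, mul_one, sub_zero, add_zero, zero_add, zero_sub, mul_neg,
      neg_zero] using h
  have hζne : ζ 0 ≠ 0 := by
    intro h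
    apply hzne 0
    have hre := congrArg Complex.re h
    have him := congrArg Complex.im h
    simp only [hζdef, Complex.add_re, Complex.ofReal_re, Complex.mul_re, Complex.I_re,
      Complex.ofReal_im, Complex.I_im, mul_zero, zero_mul, mul_one, sub_zero, add_zero,
      Complex.zero_re, Complex.add_im, Complex.mul_im, Complex.zero_im, zero_add] at hre him
    exact Prod.ext hre him
  have hR0pos : 0 < ‖ζ 0‖ := norm_pos_iff.mpr hζne
  have hRpos : ∀ t, 0 < R t := fun t => mul_pos hR0pos (Real.exp_pos _)
  have hr2R : ∀ t, r2 t = R t ^ 2 := by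
    intro t
    have hs := Real.sin_sq_add_cos_sq (A t)
    simp only [hr2]
    rw [hx t, hy t]
    nlinarith [hs]
  -- the angular potential
  set W : ℝ → ℝ := fun θ => V (Real.cos θ, Real.sin θ) with hWdef
  have hcsne : ∀ θ : ℝ, ((Real.cos θ, Real.sin θ) : ℝ × ℝ) ≠ 0 := by
    intro θ h
    have h1 := congrArg Prod.fst h
    have h2 := congrArg Prod.snd h
    simp only [Prod.fst_zero, Prod.snd_zero] at h1 h2
    nlinarith [Real.sin_sq_add_cos_sq θ]
  have hWpos : ∀ θ, 0 < W θ := fun θ => hpos _ (hcsne θ)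
  have hWc : Continuous W :=
    hV.continuous.comp (Real.continuous_cos.prodMk Real.continuous_sin)
  have hWper : Function.Periodic W (2 * Real.pi) := by
    intro θ
    simp only [hWdef, Real.cos_add_two_pi, Real.sin_add_two_pi]
  have hWA : ∀ t, W (A t) = c / R t ^ 2 := by
    intro t
    have hz_eq : z t = R t • ((Real.cos (A t), Real.sin (A t)) : ℝ × ℝ) := by
      apply Prod.ext
      · simpa [smul_eq_mul] using hx t
      · simpa [smul_eq_mul] using hy t
    have hh := hhom (R t) (hRpos t) _ (hcsne (A t))
    rw [← hz_eq, hcons t] at hh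
    rw [hh]
    field_simp
    rw [mul_div_cancel_left₀ _ (hRpos t).ne']
  have hAd : ∀ t, HasDerivAt A (β t) t := by
    intro t
    simpa only [hAdef] using ((ftc_cont hβc 0 t).const_add (Complex.arg (ζ 0)))
  have hβW : ∀ t, β t = -2 * W (A t) := by
    intro t
    simp only [hβdef]
    rw [hWA t, ← hr2R t]
    ring
  -- the period function
  set g : ℝ → ℝ := fun θ => 1 / (2 * W θ) with hgdef
  have hgc : Continuous g := by
    simp only [hgdef]
    exact continuous_const.div (continuous_const.mul hWc)
      (fun θ => (mul_pos two_pos (hWpos θ)).ne')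
  have hgpos : ∀ θ, 0 < g θ := fun θ => by
    simp only [hgdef]
    exact div_pos one_pos (mul_pos two_pos (hWpos θ))
  have hgper : Function.Periodic g (2 * Real.pi) := by
    intro θ
    simp only [hgdef, hWper θ]
  set τ : ℝ := ∫ θ in (0:ℝ)..(2 * Real.pi), g θ with hτdef
  have hτpos : 0 < τ :=
    intervalIntegral.intervalIntegral_pos_of_pos (hgc.intervalIntegrable _ _) hgpos
      Real.two_pi_pos
  set H : ℝ → ℝ := fun θ => ∫ s in (0:ℝ)..θ, g s with hHdef
  have hHd : ∀ θ, HasDerivAt H (g θ) θ := fun θ => ftc_cont hgc 0 θ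
  have hHmono : StrictMono H :=
    strictMono_of_deriv_pos (fun θ => by rw [(hHd θ).deriv]; exact hgpos θ)
  have hHsub : ∀ θ, H θ - H (θ - 2 * Real.pi) = τ := by
    intro θ
    have h1 : H θ - H (θ - 2 * Real.pi)
        = ∫ s in (θ - 2 * Real.pi)..θ, g s := by
      simp only [hHdef]
      rw [intervalIntegral.integral_interval_sub_left (hgc.intervalIntegrable _ _)
        (hgc.intervalIntegrable _ _)]
    rw [h1]
    have h2 := hgper.intervalIntegral_add_eq (θ - 2 * Real.pi) 0
    rw [sub_add_cancel] at h2
    rw [h2, zero_add]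
  have hHA : ∀ t, H (A t) + t = H (A 0) := by
    have hder : ∀ t, HasDerivAt (fun t => H (A t) + t) 0 t := by
      intro t
      have h1 : HasDerivAt (fun t => H (A t)) (g (A t) * β t) t :=
        (hHd (A t)).comp t (hAd t)
      have h2 := h1.add (hasDerivAt_id t)
      have hval : g (A t) * β t + 1 = 0 := by
        have hWne : 2 * W (A t) ≠ 0 := (mul_pos two_pos (hWpos (A t))).ne'
        rw [hβW t]
        simp only [hgdef]
        field_simp
        rw [div_self (hWpos (A t)).ne']; ring
      rw [hval] at h2
      exact h2
    intro t
    have := is_const_of_deriv_eq_zero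
      (f := fun t => H (A t) + t)
      (fun u => ((hder u).differentiableAt)) (fun u => (hder u).deriv) t 0
    simpa using this
  -- main periodicity of the angle
  have hAτ : ∀ t, A (t + τ) = A t - 2 * Real.pi := by
    intro t
    apply hHmono.injective
    have e1 := hHA (t + τ)
    have e2 := hHA t
    have e3 := hHsub (A t)
    linarith
  have hRτ : ∀ t, R (t + τ) = R t := by
    intro t
    have h1 : W (A (t + τ)) = W (A t) := by
      rw [hAτ t]
      exact hWper.sub_eq (A t)
    have h2 : c / R (t + τ) ^ 2 = c / R t ^ 2 := by
      rw [← hWA, ← hWA, h1]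
    have hne1 : R (t + τ) ^ 2 ≠ 0 := (pow_pos (hRpos (t + τ)) 2).ne'
    have hne2 : R t ^ 2 ≠ 0 := (pow_pos (hRpos t) 2).ne'
    rw [div_eq_div_iff hne1 hne2] at h2
    have h3 : R (t + τ) ^ 2 = R t ^ 2 :=
      mul_left_cancel₀ hcpos.ne' (by linarith [h2])
    nlinarith [hRpos t, hRpos (t + τ)]
  have hper : Function.Periodic z τ := by
    intro t
    apply Prod.ext
    · rw [hx (t + τ), hx t, hRτ t, hAτ t, Real.cos_sub_two_pi]
    · rw [hy (t + τ), hy t, hRτ t, hAτ t, Real.sin_sub_two_pi]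
  constructor
  · exact hper
  · -- minimality
    intro τ' hτ'pos hper'
    have h0 : z τ' = z 0 := by simpa using hper' 0
    have hc1 : R τ' * Real.cos (A τ') = R 0 * Real.cos (A 0) := by
      have h := congrArg Prod.fst h0
      rw [hx τ', hx 0] at h
      exact h
    have hc2 : R τ' * Real.sin (A τ') = R 0 * Real.sin (A 0) := by
      have h := congrArg Prod.snd h0
      rw [hy τ', hy 0] at h
      exact h
    have hRR : R τ' = R 0 := by
      have h1 : R τ' ^ 2 = R 0 ^ 2 := by
        linear_combination (R τ' * Real.cos (A τ') + R 0 * Real.cos (A 0)) * hc1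
          + (R τ' * Real.sin (A τ') + R 0 * Real.sin (A 0)) * hc2
          - R τ' ^ 2 * Real.sin_sq_add_cos_sq (A τ')
          + R 0 ^ 2 * Real.sin_sq_add_cos_sq (A 0)
      nlinarith [hRpos τ', hRpos 0]
    have hcos : Real.cos (A τ') = Real.cos (A 0) := by
      rw [hRR] at hc1
      exact mul_left_cancel₀ (hRpos 0).ne' hc1
    have hsin : Real.sin (A τ') = Real.sin (A 0) := by
      rw [hRR] at hc2
      exact mul_left_cancel₀ (hRpos 0).ne' hc2
    have hexp : Complex.exp (((A τ' : ℝ) : ℂ) * Complex.I)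
        = Complex.exp (((A 0 : ℝ) : ℂ) * Complex.I) := by
      rw [Complex.exp_mul_I, Complex.exp_mul_I, ← Complex.ofReal_cos, ← Complex.ofReal_sin,
        ← Complex.ofReal_cos, ← Complex.ofReal_sin, hcos, hsin]
    obtain ⟨n, hn⟩ := Complex.exp_eq_exp_iff_exists_int.mp hexp
    have hAn : A τ' = A 0 + (n : ℝ) * (2 * Real.pi) := by
      have h2 : ((A τ' : ℝ) : ℂ) * Complex.I
          = ((A 0 + (n : ℝ) * (2 * Real.pi) : ℝ) : ℂ) * Complex.I := by
        rw [hn]; push_cast; ring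
      have h1 := mul_right_cancel₀ Complex.I_ne_zero h2
      exact_mod_cast h1
    have hAanti : StrictAnti A :=
      strictAnti_of_deriv_neg (fun t => by
        rw [(hAd t).deriv]
        simp only [hβdef]
        exact div_neg_of_neg_of_pos (by linarith) (hr2pos t))
    have hlt : A τ' < A 0 := hAanti hτ'pos
    have hn1 : (n : ℝ) ≤ -1 := by
      have hprod : (n : ℝ) * (2 * Real.pi) < 0 := by linarith
      have hneg : n < 0 := by
        by_contra h
        push_neg at h
        have : (0:ℝ) ≤ (n : ℝ) * (2 * Real.pi) :=
          mul_nonneg (by exact_mod_cast h) (by positivity)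
        linarith
      have : n ≤ -1 := by omega
      exact_mod_cast this
    have hA2π : A τ' ≤ A 0 - 2 * Real.pi := by nlinarith [Real.two_pi_pos]
    have hHle : H (A τ') ≤ H (A 0 - 2 * Real.pi) := hHmono.monotone hA2π
    have e1 := hHA τ'
    have e2 := hHsub (A 0)
    linarith
end

section
/- Let μ, ν > 0 and T > 0. The Dirichlet problem x'' + μx⁺ − νx⁻ = 0, x(0) = 0 = x(T) admits a nontrivial solution if and only if there exists k ∈ ℕ such that T = π[(k+1)/√μ + k/√ν], or T = π[k/√μ + (k+1)/√ν], or T = π(k+1)[1/√μ + 1/√ν]. -/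
open Real Set

section waves
lemma hasDerivAt_wave (A c a : ℝ) (t : ℝ) :
    HasDerivAt (fun u => A * Real.sin (c * (u - a))) (A * c * Real.cos (c * (t - a))) t := by
  have h : HasDerivAt (fun u : ℝ => c * (u - a)) c t := by
    simpa using ((hasDerivAt_id t).sub_const a).const_mul c
  have := ((Real.hasDerivAt_sin (c * (t - a))).comp t h).const_mul A
  simpa [mul_comm, mul_assoc, mul_left_comm] using this

lemma hasDerivAt_cowave (A c a : ℝ) (t : ℝ) :
    HasDerivAt (fun u => A * Real.cos (c * (u - a))) (-(A * c * Real.sin (c * (t - a)))) t := by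
  have h : HasDerivAt (fun u : ℝ => c * (u - a)) c t := by
    simpa using ((hasDerivAt_id t).sub_const a).const_mul c
  have := ((Real.hasDerivAt_cos (c * (t - a))).comp t h).const_mul A
  exact this.congr_deriv (by ring)

lemma contDiff_wave (A c a : ℝ) : ContDiff ℝ 2 (fun u => A * Real.sin (c * (u - a))) := by
  apply ContDiff.mul contDiff_const
  exact Real.contDiff_sin.comp (contDiff_const.mul ((contDiff_id).sub contDiff_const))

lemma deriv_wave (A c a : ℝ) :
    deriv (fun u => A * Real.sin (c * (u - a))) = fun t => (A * c) * Real.cos (c * (t - a)) :=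
  funext fun t => (hasDerivAt_wave A c a t).deriv

lemma deriv2_wave (A c a : ℝ) :
    deriv (deriv (fun u => A * Real.sin (c * (u - a))))
      = fun t => -(A * c * c) * Real.sin (c * (t - a)) := by
  rw [deriv_wave]
  exact funext fun t => by simpa [mul_assoc, neg_mul] using (hasDerivAt_cowave (A*c) c a t).deriv
lemma deriv_cowave (A c a : ℝ) :
    deriv (fun u => A * Real.cos (c * (u - a))) = fun t => -(A * c) * Real.sin (c * (t - a)) :=
  funext fun t => ((hasDerivAt_cowave A c a t).deriv).trans (by ring)
end waves

lemma hasDerivAt_if_le {x y x' y' : ℝ → ℝ} {s : ℝ}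
    (hx : ∀ t, HasDerivAt x (x' t) t) (hy : ∀ t, HasDerivAt y (y' t) t)
    (h0 : x s = y s) (h1 : x' s = y' s) (t : ℝ) :
    HasDerivAt (fun u => if u ≤ s then x u else y u) (if t ≤ s then x' t else y' t) t := by
  rcases lt_trichotomy t s with h | rfl | h
  · rw [if_pos h.le]
    apply (hx t).congr_of_eventuallyEq
    filter_upwards [eventually_lt_nhds h] with u hu
    rw [if_pos hu.le]
  · rw [if_pos le_rfl]
    have hl : HasDerivWithinAt (fun u => if u ≤ t then x u else y u) (x' t) (Iic t) t := by
      apply (hx t).hasDerivWithinAt.congr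
      · intro u hu; rw [if_pos (mem_Iic.mp hu)]
      · rw [if_pos le_rfl]
    have hr : HasDerivWithinAt (fun u => if u ≤ t then x u else y u) (x' t) (Ici t) t := by
      rw [h1]
      apply (hy t).hasDerivWithinAt.congr
      · intro u hu
        rcases eq_or_lt_of_le (mem_Ici.mp hu) with rfl | hu'
        · rw [if_pos le_rfl, h0]
        · rw [if_neg (not_le.mpr hu')]
      · rw [if_pos le_rfl, h0]
    have := hl.union hr
    rwa [Iic_union_Ici, hasDerivWithinAt_univ] at this
  · rw [if_neg (not_le.mpr h)]
    apply (hy t).congr_of_eventuallyEq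
    filter_upwards [eventually_gt_nhds h] with u hu
    rw [if_neg (not_le.mpr hu)]

lemma contDiff_deriv_of_two {x : ℝ → ℝ} (hx : ContDiff ℝ 2 x) : ContDiff ℝ 1 (deriv x) := by
  have := contDiff_succ_iff_deriv (n := 1) (f := x) (𝕜 := ℝ)
  norm_num at this
  exact (this.mp hx).2

lemma glue_contDiff {x y : ℝ → ℝ} {s : ℝ} (hx : ContDiff ℝ 2 x) (hy : ContDiff ℝ 2 y)
    (h0 : x s = y s) (h1 : deriv x s = deriv y s)
    (h2 : deriv (deriv x) s = deriv (deriv y) s) :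
    ContDiff ℝ 2 (fun t => if t ≤ s then x t else y t) ∧
    (∀ t, deriv (fun u => if u ≤ s then x u else y u) t
        = if t ≤ s then deriv x t else deriv y t) ∧
    (∀ t, deriv (deriv (fun u => if u ≤ s then x u else y u)) t
        = if t ≤ s then deriv (deriv x) t else deriv (deriv y) t) := by
  have hx1 : ∀ t, HasDerivAt x (deriv x t) t :=
    fun t => (hx.differentiable (by norm_num) t).hasDerivAt
  have hy1 : ∀ t, HasDerivAt y (deriv y t) t :=
    fun t => (hy.differentiable (by norm_num) t).hasDerivAt
  have hx2 : ∀ t, HasDerivAt (deriv x) (deriv (deriv x) t) t :=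
    fun t => (((contDiff_deriv_of_two hx).differentiable one_ne_zero) t).hasDerivAt
  have hy2 : ∀ t, HasDerivAt (deriv y) (deriv (deriv y) t) t :=
    fun t => (((contDiff_deriv_of_two hy).differentiable one_ne_zero) t).hasDerivAt
  have d1 : ∀ t, HasDerivAt (fun u => if u ≤ s then x u else y u)
      (if t ≤ s then deriv x t else deriv y t) t := hasDerivAt_if_le hx1 hy1 h0 h1
  have e1 : ∀ t, deriv (fun u => if u ≤ s then x u else y u) t
      = if t ≤ s then deriv x t else deriv y t := fun t => (d1 t).deriv
  have d2 : ∀ t, HasDerivAt (fun u => if u ≤ s then deriv x u else deriv y u)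
      (if t ≤ s then deriv (deriv x) t else deriv (deriv y) t) t :=
    hasDerivAt_if_le hx2 hy2 h1 h2
  have e1' : deriv (fun u => if u ≤ s then x u else y u)
      = fun t => if t ≤ s then deriv x t else deriv y t := funext e1
  have e2 : ∀ t, deriv (deriv (fun u => if u ≤ s then x u else y u)) t
      = if t ≤ s then deriv (deriv x) t else deriv (deriv y) t := by
    intro t; rw [e1']; exact (d2 t).deriv
  refine ⟨?_, e1, e2⟩
  have h21 : (2 : WithTop ℕ∞) = 1 + 1 := by norm_num
  rw [h21, contDiff_succ_iff_deriv]
  refine ⟨fun t => ⟨_, (d1 t).hasFDerivAt⟩, by simp, ?_⟩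
  rw [e1', contDiff_one_iff_deriv]
  constructor
  · exact fun t => ⟨_, (d2 t).hasFDerivAt⟩
  · have : deriv (fun t => if t ≤ s then deriv x t else deriv y t)
        = fun t => if t ≤ s then deriv (deriv x) t else deriv (deriv y) t :=
      funext fun t => (d2 t).deriv
    rw [this]
    apply Continuous.if_le
    · exact (contDiff_one_iff_deriv.mp (contDiff_deriv_of_two hx)).2
    · exact (contDiff_one_iff_deriv.mp (contDiff_deriv_of_two hy)).2
    · exact continuous_id
    · exact continuous_const
    · intro t ht; rw [ht]; exact h2 ▸ rfl

lemma base_ex (μ ν : ℝ) (hμ : 0 < μ) (hν : 0 < ν) :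
    ∃ f : ℝ → ℝ, ContDiff ℝ 2 f ∧
      (∀ t ∈ Icc 0 (π/Real.sqrt μ + π/Real.sqrt ν),
        deriv (deriv f) t + μ * max (f t) 0 - ν * max (-(f t)) 0 = 0) ∧
      f 0 = 0 ∧ deriv f 0 = 1 ∧ deriv (deriv f) 0 = 0 ∧
      f (π/Real.sqrt μ) = 0 ∧
      f (π/Real.sqrt μ + π/Real.sqrt ν) = 0 ∧
      deriv f (π/Real.sqrt μ + π/Real.sqrt ν) = 1 ∧
      deriv (deriv f) (π/Real.sqrt μ + π/Real.sqrt ν) = 0 ∧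
      0 < f (π/Real.sqrt μ/2) := by
  have hsm0 : 0 < Real.sqrt μ := Real.sqrt_pos.mpr hμ
  have hsn0 : 0 < Real.sqrt ν := Real.sqrt_pos.mpr hν
  set sm := Real.sqrt μ
  set sn := Real.sqrt ν
  have hsm2 : sm * sm = μ := Real.mul_self_sqrt hμ.le
  have hsn2 : sn * sn = ν := Real.mul_self_sqrt hν.le
  set a := π / sm with ha
  set b := π / sn with hb
  have ha0 : 0 < a := div_pos Real.pi_pos hsm0
  have hb0 : 0 < b := div_pos Real.pi_pos hsn0
  have hsma : sm * a = π := by rw [ha]; field_simp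
  have hsnb : sn * b = π := by rw [hb]; field_simp
  have h0 : (fun u => (1/sm) * Real.sin (sm * (u - 0))) a
      = (fun u => (-(1/sn)) * Real.sin (sn * (u - a))) a := by
    simp only [sub_zero, sub_self, mul_zero, Real.sin_zero, hsma, Real.sin_pi]
  have h1 : deriv (fun u => (1/sm) * Real.sin (sm * (u - 0))) a
      = deriv (fun u => (-(1/sn)) * Real.sin (sn * (u - a))) a := by
    rw [deriv_wave, deriv_wave]
    simp only [sub_zero, sub_self, mul_zero, Real.cos_zero, hsma, Real.cos_pi]
    field_simp
  have h2 : deriv (deriv (fun u => (1/sm) * Real.sin (sm * (u - 0)))) a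
      = deriv (deriv (fun u => (-(1/sn)) * Real.sin (sn * (u - a)))) a := by
    rw [deriv2_wave, deriv2_wave]
    simp only [sub_zero, sub_self, mul_zero, Real.sin_zero, hsma, Real.sin_pi]
  obtain ⟨hC, hd1, hd2⟩ := glue_contDiff (contDiff_wave (1/sm) sm 0)
    (contDiff_wave (-(1/sn)) sn a) h0 h1 h2
  simp only [deriv_wave, deriv_cowave] at hd1 hd2
  refine ⟨fun t => if t ≤ a then (1/sm) * Real.sin (sm * (t - 0))
      else (-(1/sn)) * Real.sin (sn * (t - a)), hC, ?_, ?_, ?_, ?_, ?_, ?_, ?_, ?_, ?_⟩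
  · -- the ODE
    intro t ht
    rw [hd2 t]
    by_cases hta : t ≤ a
    · simp only [if_pos hta, sub_zero]
      have hs : 0 ≤ Real.sin (sm * t) := by
        apply Real.sin_nonneg_of_nonneg_of_le_pi
        · have := ht.1; positivity
        · rw [← hsma]; exact mul_le_mul_of_nonneg_left hta hsm0.le
      have hX0 : 0 ≤ (1/sm) * Real.sin (sm * t) := by positivity
      rw [max_eq_left hX0, max_eq_right (neg_nonpos.mpr hX0), ← hsm2]
      field_simp <;> ring
    · simp only [if_neg hta]
      have hta' : a < t := not_le.mp hta
      have hs : 0 ≤ Real.sin (sn * (t - a)) := by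
        apply Real.sin_nonneg_of_nonneg_of_le_pi
        · have h1 : (0:ℝ) ≤ t - a := by linarith
          positivity
        · rw [← hsnb]
          apply mul_le_mul_of_nonneg_left _ hsn0.le
          have := ht.2
          linarith
      have hY0 : (-(1/sn)) * Real.sin (sn * (t - a)) ≤ 0 := by
        rw [neg_mul, neg_nonpos]
        positivity
      rw [max_eq_right hY0, max_eq_left (by linarith : 0 ≤ -((-(1/sn)) * Real.sin (sn * (t - a)))), ← hsn2]
      field_simp <;> ring
  · simp [ha0.le]
  · rw [hd1 0, if_pos ha0.le]
    simp only [sub_zero, mul_zero, Real.cos_zero]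
    field_simp
  · rw [hd2 0, if_pos ha0.le]
    simp
  · simp [hsma]
  · beta_reduce
    rw [if_neg (by linarith : ¬ (a + b ≤ a))]
    simp [add_sub_cancel_left, hsnb]
  · rw [hd1 _, if_neg (by linarith : ¬ (a + b ≤ a))]
    have h : sn * (a + b - a) = π := by rw [add_sub_cancel_left, hsnb]
    rw [h, Real.cos_pi]
    field_simp
  · rw [hd2 _, if_neg (by linarith : ¬ (a + b ≤ a))]
    have h : sn * (a + b - a) = π := by rw [add_sub_cancel_left, hsnb]
    rw [h, Real.sin_pi]
    ring
  · beta_reduce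
    rw [if_pos (by linarith : a/2 ≤ a)]
    have h : sm * (a/2 - 0) = π/2 := by rw [sub_zero, ← hsma]; ring
    rw [h, Real.sin_pi_div_two]
    positivity

section translate
lemma deriv_translate {f : ℝ → ℝ} (hf : Differentiable ℝ f) (s : ℝ) :
    deriv (fun t => f (t - s)) = fun t => deriv f (t - s) := by
  funext t
  have h : HasDerivAt (fun t : ℝ => f (t - s)) (deriv f (t - s)) t := by
    simpa [Function.comp_def] using ((hf (t - s)).hasDerivAt).comp t ((hasDerivAt_id t).sub_const s)
  exact h.deriv
end translate

lemma build (μ ν : ℝ) (hμ : 0 < μ) (hν : 0 < ν) (k : ℕ) :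
    ∃ x : ℝ → ℝ, ContDiff ℝ 2 x ∧
      (∀ t ∈ Icc 0 ((k+1) * (π/Real.sqrt μ + π/Real.sqrt ν)),
        deriv (deriv x) t + μ * max (x t) 0 - ν * max (-(x t)) 0 = 0) ∧
      x 0 = 0 ∧
      x (k * (π/Real.sqrt μ + π/Real.sqrt ν) + π/Real.sqrt μ) = 0 ∧
      x ((k+1) * (π/Real.sqrt μ + π/Real.sqrt ν)) = 0 ∧
      deriv x ((k+1) * (π/Real.sqrt μ + π/Real.sqrt ν)) = 1 ∧
      deriv (deriv x) ((k+1) * (π/Real.sqrt μ + π/Real.sqrt ν)) = 0 ∧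
      0 < x (π/Real.sqrt μ/2) := by
  have hA0 : 0 < π/Real.sqrt μ := div_pos Real.pi_pos (Real.sqrt_pos.mpr hμ)
  have hB0 : 0 < π/Real.sqrt ν := div_pos Real.pi_pos (Real.sqrt_pos.mpr hν)
  set A := π/Real.sqrt μ
  set B := π/Real.sqrt ν
  set P := A + B with hP
  have hP0 : 0 < P := by positivity
  induction k with
  | zero =>
    obtain ⟨f, hC, heq, h00, _, _, hfA, hfP, hfP1, hfP2, hpos⟩ := base_ex μ ν hμ hν
    refine ⟨f, hC, ?_, h00, ?_, ?_, ?_, ?_, hpos⟩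
    · intro t ht
      apply heq t
      constructor
      · exact ht.1
      · have := ht.2; push_cast at this ⊢; linarith
    · push_cast; simpa using hfA
    · push_cast; simpa using hfP
    · push_cast; simpa using hfP1
    · push_cast; simpa using hfP2
  | succ k ih =>
    obtain ⟨x, hxC, hxeq, hx0, hxA, hxP, hxP1, hxP2, hxpos⟩ := ih
    obtain ⟨f, hfC, hfeq, hf0, hf1, hf2, hfA, hfP, hfP1, hfP2, hfpos⟩ := base_ex μ ν hμ hν
    set s : ℝ := (k+1) * P with hs
    have hs0 : 0 < s := by positivity
    have hfdiff : Differentiable ℝ f := hfC.differentiable (by norm_num)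
    have hfd2 : Differentiable ℝ (deriv f) := (contDiff_deriv_of_two hfC).differentiable one_ne_zero
    set y : ℝ → ℝ := fun t => f (t - s) with hy
    have hyC : ContDiff ℝ 2 y := hfC.comp ((contDiff_id).sub contDiff_const)
    have hyd1 : deriv y = fun t => deriv f (t - s) := deriv_translate hfdiff s
    have hyd2 : deriv (deriv y) = fun t => deriv (deriv f) (t - s) := by
      rw [hyd1]; exact deriv_translate hfd2 s
    have h0 : x s = y s := by
      rw [hy]; simp only [sub_self]; rw [hf0]; exact hxP
    have h1 : deriv x s = deriv y s := by
      rw [hyd1]; simp only [sub_self]; rw [hf1]; exact hxP1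
    have h2 : deriv (deriv x) s = deriv (deriv y) s := by
      rw [hyd2]; simp only [sub_self]; rw [hf2]; exact hxP2
    obtain ⟨hC, hd1, hd2⟩ := glue_contDiff hxC hyC h0 h1 h2
    have key : ((k:ℝ)+1+1) * P = s + P := by rw [hs]; ring
    have hsge : P ≤ s := by
      rw [hs]
      nlinarith [hP0.le, Nat.cast_nonneg (α := ℝ) k]
    refine ⟨fun t => if t ≤ s then x t else y t, hC, ?_, ?_, ?_, ?_, ?_, ?_, ?_⟩
    · intro t ht
      beta_reduce
      rw [hd2 t]
      by_cases hts : t ≤ s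
      · rw [if_pos hts, if_pos hts]
        exact hxeq t ⟨ht.1, hts⟩
      · rw [if_neg hts, if_neg hts, hy, hyd2]
        have hts' : s < t := not_le.mp hts
        have htP : t ≤ s + P := by
          have := ht.2; push_cast at this; linarith [key]
        exact hfeq (t - s) ⟨by linarith, by linarith⟩
    · beta_reduce
      rw [if_pos hs0.le]; exact hx0
    · have hcs : ¬ ((k:ℝ)+1) * P + A ≤ s := by
        rw [hs]; push_cast; nlinarith
      beta_reduce
      push_cast
      rw [if_neg hcs, hy]
      beta_reduce
      have : ((k:ℝ)+1) * P + A - s = A := by rw [hs]; ring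
      rw [this]; exact hfA
    · beta_reduce
      push_cast
      rw [key, if_neg (by linarith : ¬ (s + P ≤ s)), hy]
      simpa using hfP
    · push_cast
      rw [key, hd1 _, if_neg (by linarith : ¬ (s + P ≤ s)), hyd1]
      simpa using hfP1
    · push_cast
      rw [key, hd2 _, if_neg (by linarith : ¬ (s + P ≤ s)), hyd2]
      simpa using hfP2
    · beta_reduce
      rw [if_pos (by linarith : A/2 ≤ s)]
      exact hxpos

lemma exists_solution (μ ν T : ℝ) (hμ : 0 < μ) (hν : 0 < ν)
    (h : ∃ k : ℕ,
        T = π * ((k + 1) / Real.sqrt μ + k / Real.sqrt ν) ∨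
        T = π * (k / Real.sqrt μ + (k + 1) / Real.sqrt ν) ∨
        T = π * (k + 1) * (1 / Real.sqrt μ + 1 / Real.sqrt ν)) :
    ∃ x : ℝ → ℝ, ContDiff ℝ 2 x ∧
      (∀ t ∈ Icc 0 T, deriv (deriv x) t + μ * max (x t) 0 - ν * max (-(x t)) 0 = 0) ∧
      x 0 = 0 ∧ x T = 0 ∧ ∃ t ∈ Icc 0 T, x t ≠ 0 := by
  have hsm0 : 0 < Real.sqrt μ := Real.sqrt_pos.mpr hμ
  have hsn0 : 0 < Real.sqrt ν := Real.sqrt_pos.mpr hν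
  have hA0 : 0 < π/Real.sqrt μ := div_pos Real.pi_pos hsm0
  have hB0 : 0 < π/Real.sqrt ν := div_pos Real.pi_pos hsn0
  set A := π/Real.sqrt μ with hA
  set B := π/Real.sqrt ν with hB
  have hk0 : ∀ k : ℕ, (0:ℝ) ≤ (k:ℝ) := fun k => Nat.cast_nonneg k
  obtain ⟨k, h1 | h2 | h3⟩ := h
  · -- T = k(A+B) + A
    have hTeq : T = (k:ℝ) * (A + B) + A := by
      rw [h1, hA, hB]; push_cast; ring
    obtain ⟨x, hC, heq, hx0, hxA, hxP, _, _, hxpos⟩ := build μ ν hμ hν k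
    have hTle : T ≤ ((k:ℝ)+1) * (A + B) := by rw [hTeq]; nlinarith [hk0 k]
    refine ⟨x, hC, ?_, hx0, by rw [hTeq]; exact hxA, ⟨A/2, ⟨by positivity, ?_⟩, ne_of_gt hxpos⟩⟩
    · intro t ht
      apply heq t
      refine ⟨ht.1, le_trans ht.2 (by push_cast; exact hTle)⟩
    · rw [hTeq]; nlinarith [hk0 k]
  · -- swapped: T = k(B+A) + B, use negated solution for (ν, μ)
    have hTeq : T = (k:ℝ) * (B + A) + B := by
      rw [h2, hA, hB]; push_cast; ring
    obtain ⟨u, hC, heq, hu0, huA, huP, _, _, hupos⟩ := build ν μ hν hμ k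
    have e1 : deriv (fun t => -(u t)) = fun t => -(deriv u t) := funext fun t => deriv.neg
    have e2 : ∀ t, deriv (deriv (fun t => -(u t))) t = -(deriv (deriv u) t) := by
      intro t; rw [e1]; exact deriv.neg
    have hTle : T ≤ ((k:ℝ)+1) * (B + A) := by rw [hTeq]; nlinarith [hk0 k]
    refine ⟨fun t => -(u t), hC.neg, ?_, by simpa using hu0, ?_,
      ⟨B/2, ⟨by positivity, ?_⟩, ?_⟩⟩
    · intro t ht
      have ht' : t ∈ Icc 0 (((k:ℝ)+1) * (π/Real.sqrt ν + π/Real.sqrt μ)) := by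
        refine ⟨ht.1, le_trans ht.2 ?_⟩
        push_cast
        exact hTle
      have := heq t ht'
      rw [e2 t]
      simp only [neg_neg]
      linarith [this]
    · beta_reduce
      rw [hTeq]
      rw [show (k:ℝ) * (B + A) + B = (k:ℝ) * (π/Real.sqrt ν + π/Real.sqrt μ) + π/Real.sqrt ν
        from by rw [hA, hB]]
      rw [huA]
      exact neg_zero
    · rw [hTeq]; nlinarith [hk0 k]
    · beta_reduce
      simp only [ne_eq, neg_eq_zero]
      exact ne_of_gt hupos
  · -- T = (k+1)(A+B)
    have hTeq : T = ((k:ℝ)+1) * (A + B) := by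
      rw [h3, hA, hB]; push_cast; ring
    obtain ⟨x, hC, heq, hx0, hxA, hxP, _, _, hxpos⟩ := build μ ν hμ hν k
    refine ⟨x, hC, ?_, hx0, by rw [hTeq]; push_cast at hxP ⊢; exact hxP,
      ⟨A/2, ⟨by positivity, ?_⟩, ne_of_gt hxpos⟩⟩
    · intro t ht
      apply heq t
      refine ⟨ht.1, le_trans ht.2 (le_of_eq (by rw [hTeq]))⟩
    · rw [hTeq]; nlinarith [hk0 k]


lemma f0_lip (μ ν : ℝ) (hμ : 0 < μ) (hν : 0 < ν) :
    LipschitzWith ⟨max 1 (μ+ν), le_trans zero_le_one (le_max_left _ _)⟩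
      (fun p : ℝ × ℝ => (p.2, ν * max (-p.1) 0 - μ * max p.1 0)) := by
  apply LipschitzWith.of_dist_le_mul
  intro p q
  rw [Prod.dist_eq]
  simp only [NNReal.coe_mk]
  have h1 : dist p.1 q.1 ≤ dist p q := by rw [Prod.dist_eq]; exact le_max_left _ _
  have h2 : dist p.2 q.2 ≤ dist p q := by rw [Prod.dist_eq]; exact le_max_right _ _
  apply max_le
  · calc dist p.2 q.2 ≤ dist p q := h2
      _ ≤ max 1 (μ+ν) * dist p q := by nlinarith [dist_nonneg (x := p) (y := q), le_max_left 1 (μ+ν)]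
  · have key : dist (ν * max (-p.1) 0 - μ * max p.1 0) (ν * max (-q.1) 0 - μ * max q.1 0)
        ≤ (μ + ν) * dist p.1 q.1 := by
      rw [Real.dist_eq, Real.dist_eq]
      have e1 : |max (-p.1) 0 - max (-q.1) 0| ≤ |p.1 - q.1| := by
        calc |max (-p.1) 0 - max (-q.1) 0| ≤ |(-p.1) - (-q.1)| := abs_max_sub_max_le_abs _ _ _
          _ = |p.1 - q.1| := by rw [← abs_neg]; ring_nf
      have e2 : |max p.1 0 - max q.1 0| ≤ |p.1 - q.1| := abs_max_sub_max_le_abs _ _ _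
      calc |ν * max (-p.1) 0 - μ * max p.1 0 - (ν * max (-q.1) 0 - μ * max q.1 0)|
          = |ν * (max (-p.1) 0 - max (-q.1) 0) - μ * (max p.1 0 - max q.1 0)| := by ring_nf
        _ ≤ |ν * (max (-p.1) 0 - max (-q.1) 0)| + |μ * (max p.1 0 - max q.1 0)| := abs_sub _ _
        _ = ν * |max (-p.1) 0 - max (-q.1) 0| + μ * |max p.1 0 - max q.1 0| := by
            rw [abs_mul, abs_mul, abs_of_pos hν, abs_of_pos hμ]
        _ ≤ ν * |p.1 - q.1| + μ * |p.1 - q.1| := by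
            have := hν.le; have := hμ.le
            gcongr
        _ = (μ + ν) * |p.1 - q.1| := by ring
    calc dist (ν * max (-p.1) 0 - μ * max p.1 0) (ν * max (-q.1) 0 - μ * max q.1 0)
        ≤ (μ + ν) * dist p.1 q.1 := key
      _ ≤ (μ + ν) * dist p q := by
          have := dist_nonneg (x := p.1) (y := q.1); nlinarith
      _ ≤ max 1 (μ+ν) * dist p q := by
          have := dist_nonneg (x := p) (y := q); nlinarith [le_max_right 1 (μ+ν)]

lemma uniq_on (μ ν T : ℝ) (hμ : 0 < μ) (hν : 0 < ν) (x : ℝ → ℝ)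
    (hC : ContDiff ℝ 2 x)
    (heq : ∀ t ∈ Icc 0 T, deriv (deriv x) t + μ * max (x t) 0 - ν * max (-(x t)) 0 = 0)
    (g1 g2 : ℝ → ℝ) (a b : ℝ) (ha : 0 ≤ a) (hb : b ≤ T) (hab : a ≤ b)
    (hg : ∀ t ∈ Icc a b, HasDerivAt g1 (g2 t) t ∧
      HasDerivAt g2 (ν * max (-(g1 t)) 0 - μ * max (g1 t) 0) t)
    (h1 : x a = g1 a) (h2 : deriv x a = g2 a) :
    ∀ t ∈ Icc a b, x t = g1 t ∧ deriv x t = g2 t := by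
  have hx1 : ∀ t, HasDerivAt x (deriv x t) t :=
    fun t => (hC.differentiable (by norm_num) t).hasDerivAt
  have hCd : ContDiff ℝ 1 (deriv x) := by
    have := contDiff_succ_iff_deriv (n := 1) (f := x) (𝕜 := ℝ)
    norm_num at this
    exact (this.mp hC).2
  have hx2 : ∀ t, HasDerivAt (deriv x) (deriv (deriv x) t) t :=
    fun t => ((hCd.differentiable one_ne_zero) t).hasDerivAt
  set F : ℝ × ℝ → ℝ × ℝ := fun p => (p.2, ν * max (-p.1) 0 - μ * max p.1 0) with hF
  set f : ℝ → ℝ × ℝ := fun t => (x t, deriv x t) with hf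
  set g : ℝ → ℝ × ℝ := fun t => (g1 t, g2 t) with hg'
  have key : EqOn f g (Icc a b) := by
    apply ODE_solution_unique (v := fun _ p => F p) (fun _ => f0_lip μ ν hμ hν)
    · exact (Continuous.prodMk hC.continuous (hCd.continuous)).continuousOn
    · intro t ht
      have hteq : deriv (deriv x) t = ν * max (-(x t)) 0 - μ * max (x t) 0 := by
        have := heq t ⟨le_trans ha ht.1, le_trans ht.2.le hb⟩
        linarith
      have : HasDerivAt f (F (f t)) t := by
        rw [hf, hF]
        exact HasDerivAt.prodMk (hx1 t) (by rw [← hteq]; exact hx2 t)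
      exact this.hasDerivWithinAt
    · intro t ht
      exact (((hg t ht).1.continuousAt).prodMk ((hg t ht).2.continuousAt)).continuousWithinAt
    · intro t ht
      have ht' : t ∈ Icc a b := ⟨ht.1, ht.2.le⟩
      have : HasDerivAt g (F (g t)) t := by
        rw [hg', hF]
        exact HasDerivAt.prodMk (hg t ht').1 (hg t ht').2
      exact this.hasDerivWithinAt
    · rw [hf, hg', Prod.mk.injEq]; exact ⟨h1, h2⟩
  intro t ht
  have := key ht
  rw [hf, hg', Prod.mk.injEq] at this
  exact ⟨this.1, this.2⟩

lemma hasDerivAt_wave' (A c a : ℝ) (t : ℝ) :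
    HasDerivAt (fun u => A * Real.sin (c * (u - a))) (A * c * Real.cos (c * (t - a))) t := by
  have h : HasDerivAt (fun u : ℝ => c * (u - a)) c t := by
    simpa using ((hasDerivAt_id t).sub_const a).const_mul c
  have := ((Real.hasDerivAt_sin (c * (t - a))).comp t h).const_mul A
  simpa [mul_comm, mul_assoc, mul_left_comm] using this

lemma hasDerivAt_cowave' (A c a : ℝ) (t : ℝ) :
    HasDerivAt (fun u => A * Real.cos (c * (u - a))) (-(A * c * Real.sin (c * (t - a)))) t := by
  have h : HasDerivAt (fun u : ℝ => c * (u - a)) c t := by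
    simpa using ((hasDerivAt_id t).sub_const a).const_mul c
  have := ((Real.hasDerivAt_cos (c * (t - a))).comp t h).const_mul A
  exact this.congr_deriv (by ring)

lemma all_zero (μ ν T : ℝ) (hμ : 0 < μ) (hν : 0 < ν) (x : ℝ → ℝ)
    (hC : ContDiff ℝ 2 x)
    (heq : ∀ t ∈ Icc 0 T, deriv (deriv x) t + μ * max (x t) 0 - ν * max (-(x t)) 0 = 0)
    (hT : 0 ≤ T) (hx0 : x 0 = 0) (hd0 : deriv x 0 = 0) :
    ∀ t ∈ Icc 0 T, x t = 0 := by
  have := uniq_on μ ν T hμ hν x hC heq (fun _ => 0) (fun _ => 0) 0 T le_rfl le_rfl hT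
    (fun t _ => ⟨hasDerivAt_const t 0, by simpa using hasDerivAt_const t 0⟩)
    (by simpa using hx0) (by simpa using hd0)
  exact fun t ht => (this t ht).1

lemma step_pos (μ ν T : ℝ) (hμ : 0 < μ) (hν : 0 < ν) (x : ℝ → ℝ)
    (hC : ContDiff ℝ 2 x)
    (heq : ∀ t ∈ Icc 0 T, deriv (deriv x) t + μ * max (x t) 0 - ν * max (-(x t)) 0 = 0)
    (hxT : x T = 0) (a m : ℝ) (ha : 0 ≤ a) (haT : a < T)
    (hxa : x a = 0) (hm : deriv x a = m) (hm0 : 0 < m) :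
    a + π/Real.sqrt μ ≤ T ∧ x (a + π/Real.sqrt μ) = 0 ∧ deriv x (a + π/Real.sqrt μ) = -m := by
  have hsm0 : 0 < Real.sqrt μ := Real.sqrt_pos.mpr hμ
  set sm := Real.sqrt μ with hsm
  have hsm2 : sm * sm = μ := Real.mul_self_sqrt hμ.le
  set A := π / sm with hA
  have hA0 : 0 < A := div_pos Real.pi_pos hsm0
  have hsmA : sm * A = π := by rw [hA]; field_simp
  set g1 : ℝ → ℝ := fun t => (m/sm) * Real.sin (sm*(t-a)) with hg1
  set g2 : ℝ → ℝ := fun t => m * Real.cos (sm*(t-a)) with hg2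
  set b := min (a + A) T with hb
  have hab : a ≤ b := le_min (by linarith) haT.le
  have hg : ∀ t ∈ Icc a b, HasDerivAt g1 (g2 t) t ∧
      HasDerivAt g2 (ν * max (-(g1 t)) 0 - μ * max (g1 t) 0) t := by
    intro t ht
    have htA : t ≤ a + A := le_trans ht.2 (min_le_left _ _)
    have hsin : 0 ≤ Real.sin (sm*(t-a)) := by
      apply Real.sin_nonneg_of_nonneg_of_le_pi
      · have h' : 0 ≤ t - a := by linarith [ht.1]
        positivity
      · rw [← hsmA]; nlinarith
    have hg1nn : 0 ≤ g1 t := by rw [hg1]; positivity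
    constructor
    · have h := hasDerivAt_wave' (m/sm) sm a t
      convert h using 1
      rw [hg2]
      field_simp
    · have h := hasDerivAt_cowave' m sm a t
      convert h using 1
      rw [max_eq_left hg1nn, max_eq_right (neg_nonpos.mpr hg1nn), hg1, ← hsm2]
      field_simp
      ring
  have init1 : x a = g1 a := by rw [hg1]; simp [hxa]
  have init2 : deriv x a = g2 a := by rw [hg2]; simp [hm]
  have uniq := uniq_on μ ν T hμ hν x hC heq g1 g2 a b ha (min_le_right _ _) hab hg init1 init2
  have hbT : a + A ≤ T := by
    by_contra hcon
    push_neg at hcon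
    have hbeq : b = T := min_eq_right hcon.le
    have := (uniq T ⟨haT.le, by rw [hbeq]⟩).1
    rw [hxT, hg1] at this
    have hsinpos : 0 < Real.sin (sm*(T-a)) := by
      apply Real.sin_pos_of_pos_of_lt_pi
      · have : 0 < T - a := by linarith
        positivity
      · rw [← hsmA]; nlinarith
    have : 0 < (m/sm) * Real.sin (sm*(T-a)) := by positivity
    linarith [this]
  have hbeq : b = a + A := min_eq_left hbT
  have hend := uniq (a + A) ⟨by linarith, by rw [hbeq]⟩
  have hval : sm * (a + A - a) = π := by rw [add_sub_cancel_left, hsmA]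
  refine ⟨hbT, ?_, ?_⟩
  · rw [hend.1, hg1]; beta_reduce; rw [hval]; simp
  · rw [hend.2, hg2]; beta_reduce; rw [hval]; simp

lemma spec_aux : ∀ n : ℕ, ∀ μ ν T : ℝ, 0 < μ → 0 < ν → ∀ x : ℝ → ℝ, ContDiff ℝ 2 x →
    (∀ t ∈ Icc 0 T, deriv (deriv x) t + μ * max (x t) 0 - ν * max (-(x t)) 0 = 0) →
    x T = 0 →
    ∀ a, 0 ≤ a → a < T → T - a ≤ n * min (π/Real.sqrt μ) (π/Real.sqrt ν) →
    x a = 0 → 0 < deriv x a →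
    ∃ k : ℕ, T - a = (k+1) * (π/Real.sqrt μ) + k * (π/Real.sqrt ν)
           ∨ T - a = (k+1) * (π/Real.sqrt μ) + (k+1) * (π/Real.sqrt ν) := by
  intro n
  induction n with
  | zero =>
    intro μ ν T hμ hν x _ _ _ a _ haT hbound _ _
    exfalso
    simp only [Nat.cast_zero, zero_mul] at hbound
    linarith
  | succ n ih =>
    intro μ ν T hμ hν x hC heq hxT a ha haT hbound hxa hda
    have hA0 : 0 < π/Real.sqrt μ := div_pos Real.pi_pos (Real.sqrt_pos.mpr hμ)
    have hB0 : 0 < π/Real.sqrt ν := div_pos Real.pi_pos (Real.sqrt_pos.mpr hν)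
    obtain ⟨hb1, hb2, hb3⟩ := step_pos μ ν T hμ hν x hC heq hxT a (deriv x a) ha haT hxa rfl hda
    rcases eq_or_lt_of_le hb1 with heqT | hlt
    · refine ⟨0, Or.inl ?_⟩
      push_cast
      rw [← heqT]
      ring
    · have hCn : ContDiff ℝ 2 (fun t => -(x t)) := hC.neg
      have e1 : deriv (fun t => -(x t)) = fun t => -(deriv x t) := funext fun t => deriv.neg
      have e2 : ∀ t, deriv (deriv (fun t => -(x t))) t = -(deriv (deriv x) t) := fun t => by
        rw [e1]; exact deriv.neg
      have heqn : ∀ t ∈ Icc 0 T, deriv (deriv (fun t => -(x t))) t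
          + ν * max ((fun t => -(x t)) t) 0 - μ * max (-((fun t => -(x t)) t)) 0 = 0 := by
        intro t ht
        have := heq t ht
        rw [e2 t]
        simp only [neg_neg]
        linarith
      have hbound' : T - (a + π/Real.sqrt μ)
          ≤ n * min (π/Real.sqrt ν) (π/Real.sqrt μ) := by
        rw [min_comm]
        have h1 : min (π/Real.sqrt μ) (π/Real.sqrt ν) ≤ π/Real.sqrt μ := min_le_left _ _
        push_cast at hbound
        linarith
      have hda' : 0 < deriv (fun t => -(x t)) (a + π/Real.sqrt μ) := by
        rw [e1]
        beta_reduce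
        rw [hb3]
        simpa using hda
      obtain ⟨k, hk | hk⟩ := ih ν μ T hν hμ _ hCn heqn (by simpa using hxT)
        (a + π/Real.sqrt μ) (by positivity) hlt hbound' (by simpa using hb2) hda'
      · refine ⟨k, Or.inr ?_⟩
        push_cast at hk ⊢
        linarith
      · refine ⟨k+1, Or.inl ?_⟩
        push_cast at hk ⊢
        linarith

lemma forward_dir (μ ν T : ℝ) (hμ : 0 < μ) (hν : 0 < ν) (hT : 0 < T)
    (h : ∃ x : ℝ → ℝ, ContDiff ℝ 2 x ∧
        (∀ t ∈ Icc 0 T, deriv (deriv x) t + μ * max (x t) 0 - ν * max (-(x t)) 0 = 0) ∧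
        x 0 = 0 ∧ x T = 0 ∧ ∃ t ∈ Icc 0 T, x t ≠ 0) :
    ∃ k : ℕ,
      T = π * ((k + 1) / Real.sqrt μ + k / Real.sqrt ν) ∨
      T = π * (k / Real.sqrt μ + (k + 1) / Real.sqrt ν) ∨
      T = π * (k + 1) * (1 / Real.sqrt μ + 1 / Real.sqrt ν) := by
  obtain ⟨x, hC, heq, hx0, hxT, t0, ht0, hxt0⟩ := h
  have hA0 : 0 < π/Real.sqrt μ := div_pos Real.pi_pos (Real.sqrt_pos.mpr hμ)
  have hB0 : 0 < π/Real.sqrt ν := div_pos Real.pi_pos (Real.sqrt_pos.mpr hν)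
  have hδ0 : 0 < min (π/Real.sqrt μ) (π/Real.sqrt ν) := lt_min hA0 hB0
  have hd0 : deriv x 0 ≠ 0 := by
    intro hd
    exact hxt0 (all_zero μ ν T hμ hν x hC heq hT.le hx0 hd t0 ht0)
  obtain ⟨n, hn⟩ := exists_nat_ge (T / min (π/Real.sqrt μ) (π/Real.sqrt ν))
  have hTn : T ≤ n * min (π/Real.sqrt μ) (π/Real.sqrt ν) := by
    rw [div_le_iff₀ hδ0] at hn
    linarith
  have hTn' : T ≤ n * min (π/Real.sqrt ν) (π/Real.sqrt μ) := by rwa [min_comm]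
  rcases lt_or_gt_of_ne hd0 with hneg | hpos
  · -- deriv x 0 < 0 : use negated solution with swapped coefficients
    have hCn : ContDiff ℝ 2 (fun t => -(x t)) := hC.neg
    have e1 : deriv (fun t => -(x t)) = fun t => -(deriv x t) := funext fun t => deriv.neg
    have e2 : ∀ t, deriv (deriv (fun t => -(x t))) t = -(deriv (deriv x) t) := fun t => by
      rw [e1]; exact deriv.neg
    have heqn : ∀ t ∈ Icc 0 T, deriv (deriv (fun t => -(x t))) t
        + ν * max ((fun t => -(x t)) t) 0 - μ * max (-((fun t => -(x t)) t)) 0 = 0 := by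
      intro t ht
      have := heq t ht
      rw [e2 t]
      simp only [neg_neg]
      linarith
    have hda : 0 < deriv (fun t => -(x t)) 0 := by
      rw [e1]; beta_reduce; linarith
    obtain ⟨k, hk | hk⟩ := spec_aux n ν μ T hν hμ _ hCn heqn (by simpa using hxT)
      0 le_rfl hT (by rwa [sub_zero]) (by simpa using hx0) hda
    · refine ⟨k, Or.inr (Or.inl ?_)⟩
      rw [sub_zero] at hk
      rw [hk]
      push_cast
      ring
    · refine ⟨k, Or.inr (Or.inr ?_)⟩
      rw [sub_zero] at hk
      rw [hk]
      push_cast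
      ring
  · obtain ⟨k, hk | hk⟩ := spec_aux n μ ν T hμ hν x hC heq hxT
      0 le_rfl hT (by rwa [sub_zero]) hx0 hpos
    · refine ⟨k, Or.inl ?_⟩
      rw [sub_zero] at hk
      rw [hk]
      push_cast
      ring
    · refine ⟨k, Or.inr (Or.inr ?_)⟩
      rw [sub_zero] at hk
      rw [hk]
      push_cast
      ring


/-- The Dirichlet problem `x'' + μx⁺ − νx⁻ = 0`, `x(0) = 0 = x(T)` admits a nontrivial
solution iff `T = π[(k+1)/√μ + k/√ν]`, or `T = π[k/√μ + (k+1)/√ν]`, or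
`T = π(k+1)[1/√μ + 1/√ν]` for some `k ∈ ℕ`. -/
theorem dirichlet_resonance_iff (μ ν T : ℝ) (hμ : 0 < μ) (hν : 0 < ν) (hT : 0 < T) :
    (∃ x : ℝ → ℝ, ContDiff ℝ 2 x ∧
        (∀ t ∈ Set.Icc 0 T,
          deriv (deriv x) t + μ * max (x t) 0 - ν * max (-(x t)) 0 = 0) ∧
        x 0 = 0 ∧ x T = 0 ∧ ∃ t ∈ Set.Icc 0 T, x t ≠ 0) ↔
      ∃ k : ℕ,
        T = Real.pi * ((k + 1) / Real.sqrt μ + k / Real.sqrt ν) ∨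
        T = Real.pi * (k / Real.sqrt μ + (k + 1) / Real.sqrt ν) ∨
        T = Real.pi * (k + 1) * (1 / Real.sqrt μ + 1 / Real.sqrt ν) := by
  constructor
  · exact fun h => forward_dir μ ν T hμ hν hT h
  · exact fun h => exists_solution μ ν T hμ hν h
end

section
/- Let V₁ ≤ V₂ be positive, C¹, positively homogeneous functions of degree 2 on ℝ², and γ : [0,T]×ℝ² → [0,1] a Carathéodory function. Suppose z is a never-zero absolutely continuous solution of Jz' = (1−γ(t,z))∇V₁(z) + γ(t,z)∇V₂(z) whose polar angle ϑ decreases from ϑ(t₀) = θ₀ to ϑ(t₁) = θ₁ < θ₀ on [t₀,t₁] ⊂ [0,T]. Then ∫_{θ₁}^{θ₀} dθ/(2V₂(cos θ, sin θ)) ≤ t₁ − t₀ ≤ ∫_{θ₁}^{θ₀} dθ/(2V₁(cos θ, sin θ)). -/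
open Set

lemma cs_ne_zero (a : ℝ) : ((Real.cos a, Real.sin a) : ℝ × ℝ) ≠ 0 := by
  intro h
  have h1 : Real.cos a = 0 := congrArg Prod.fst h
  have h2 : Real.sin a = 0 := congrArg Prod.snd h
  have := Real.sin_sq_add_cos_sq a
  rw [h1, h2] at this
  norm_num at this

lemma euler2 {V : ℝ × ℝ → ℝ} (hV : ContDiff ℝ 1 V)
    (hhom : ∀ l : ℝ, 0 < l → ∀ w : ℝ × ℝ, w ≠ 0 → V (l • w) = l ^ 2 * V w)
    {w : ℝ × ℝ} (hw : w ≠ 0) : fderiv ℝ V w w = 2 * V w := by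
  have h1 : HasDerivAt (fun l : ℝ => l • w) w 1 := by
    simpa using (hasDerivAt_id (1 : ℝ)).smul_const w
  have h2 : HasFDerivAt V (fderiv ℝ V w) ((1 : ℝ) • w) := by
    rw [one_smul]; exact (hV.differentiable one_ne_zero w).hasFDerivAt
  have hd : HasDerivAt (fun l : ℝ => V (l • w)) (fderiv ℝ V w w) 1 := by
    exact h2.comp_hasDerivAt 1 h1
  have hd2 : HasDerivAt (fun l : ℝ => l ^ 2 * V w) (2 * V w) 1 := by
    simpa using (hasDerivAt_pow 2 (1 : ℝ)).mul_const (V w)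
  have heq : (fun l : ℝ => V (l • w)) =ᶠ[nhds (1 : ℝ)] fun l => l ^ 2 * V w := by
    filter_upwards [Ioi_mem_nhds (by norm_num : (0:ℝ) < 1)] with l hl
    exact hhom l hl w hw
  exact hd.unique (hd2.congr_of_eventuallyEq heq)

/-- Time estimates: if the polar angle of a never-zero solution of
`Jz' = (1−γ)∇V₁(z) + γ∇V₂(z)` decreases from `θ₀` to `θ₁` on `[t₀,t₁]`, then
`∫_{θ₁}^{θ₀} dθ/(2V₂) ≤ t₁ − t₀ ≤ ∫_{θ₁}^{θ₀} dθ/(2V₁)`. -/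
theorem time_between_angles (T : ℝ) (hT : 0 < T)
    (V₁ V₂ : ℝ × ℝ → ℝ)
    (hV₁ : ContDiff ℝ 1 V₁) (hV₂ : ContDiff ℝ 1 V₂)
    (hhom₁ : ∀ l : ℝ, 0 < l → ∀ w : ℝ × ℝ, w ≠ 0 → V₁ (l • w) = l ^ 2 * V₁ w)
    (hhom₂ : ∀ l : ℝ, 0 < l → ∀ w : ℝ × ℝ, w ≠ 0 → V₂ (l • w) = l ^ 2 * V₂ w)
    (hpos₁ : ∀ w : ℝ × ℝ, w ≠ 0 → 0 < V₁ w)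
    (hpos₂ : ∀ w : ℝ × ℝ, w ≠ 0 → 0 < V₂ w)
    (hle : ∀ w : ℝ × ℝ, V₁ w ≤ V₂ w)
    (γ : ℝ → ℝ × ℝ → ℝ)
    (hγ : ∀ t z, γ t z ∈ Set.Icc (0:ℝ) 1)
    (t₀ t₁ θ₀ θ₁ : ℝ) (ht : t₀ < t₁)
    (hsub : Set.Icc t₀ t₁ ⊆ Set.Icc 0 T)
    (z z' : ℝ → ℝ × ℝ) (ρ ϑ ϑ' : ℝ → ℝ)
    (hρ : ∀ t ∈ Set.Icc t₀ t₁, 0 < ρ t)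
    (hpolar : ∀ t ∈ Set.Icc t₀ t₁, z t = ρ t • (Real.cos (ϑ t), Real.sin (ϑ t)))
    (hz : ∀ t ∈ Set.Icc t₀ t₁, HasDerivAt z (z' t) t)
    (hϑ : ∀ t ∈ Set.Icc t₀ t₁, HasDerivAt ϑ (ϑ' t) t)
    (hode : ∀ t ∈ Set.Icc t₀ t₁,
      J2 (z' t) = (1 - γ t (z t)) • grad2 V₁ (z t) + γ t (z t) • grad2 V₂ (z t))
    (hdec : AntitoneOn ϑ (Set.Icc t₀ t₁))
    (hθ₀ : ϑ t₀ = θ₀) (hθ₁ : ϑ t₁ = θ₁) (hθ : θ₁ < θ₀) :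
    (∫ θ in θ₁..θ₀, 1 / (2 * V₂ (Real.cos θ, Real.sin θ))) ≤ t₁ - t₀ ∧
      t₁ - t₀ ≤ ∫ θ in θ₁..θ₀, 1 / (2 * V₁ (Real.cos θ, Real.sin θ)) := by
  -- the unit vector along z
  set u : ℝ → ℝ × ℝ := fun t => (Real.cos (ϑ t), Real.sin (ϑ t)) with hu
  -- Key pointwise identity for the angular velocity on the open interval
  have key : ∀ t ∈ Ioo t₀ t₁,
      ϑ' t = -(2 * ((1 - γ t (z t)) * V₁ (u t) + γ t (z t) * V₂ (u t))) := by
    intro t htO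
    have htI : t ∈ Icc t₀ t₁ := Ioo_subset_Icc_self htO
    have hr : 0 < ρ t := hρ t htI
    have P1 : (z t).1 = ρ t * Real.cos (ϑ t) := by rw [hpolar t htI]; simp [smul_eq_mul]
    have P2 : (z t).2 = ρ t * Real.sin (ϑ t) := by rw [hpolar t htI]; simp [smul_eq_mul]
    have hzne : z t ≠ 0 := by
      rw [hpolar t htI]; exact smul_ne_zero hr.ne' (cs_ne_zero _)
    -- component derivatives
    have hz1 : HasDerivAt (fun τ => (z τ).1) (z' t).1 t := by
      exact (ContinuousLinearMap.fst ℝ ℝ ℝ).hasFDerivAt.comp_hasDerivAt t (hz t htI)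
    have hz2 : HasDerivAt (fun τ => (z τ).2) (z' t).2 t := by
      exact (ContinuousLinearMap.snd ℝ ℝ ℝ).hasFDerivAt.comp_hasDerivAt t (hz t htI)
    have hc : HasDerivAt (fun τ => Real.cos (ϑ τ)) (-Real.sin (ϑ t) * ϑ' t) t :=
      (Real.hasDerivAt_cos (ϑ t)).comp t (hϑ t htI)
    have hs : HasDerivAt (fun τ => Real.sin (ϑ τ)) (Real.cos (ϑ t) * ϑ' t) t :=
      (Real.hasDerivAt_sin (ϑ t)).comp t (hϑ t htI)
    -- the function g ≡ 0 near t
    have hg : HasDerivAt (fun τ => -(z τ).1 * Real.sin (ϑ τ) + (z τ).2 * Real.cos (ϑ τ))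
        ((-(z' t).1 * Real.sin (ϑ t) + -(z t).1 * (Real.cos (ϑ t) * ϑ' t)) +
          ((z' t).2 * Real.cos (ϑ t) + (z t).2 * (-Real.sin (ϑ t) * ϑ' t))) t :=
      (hz1.neg.mul hs).add (hz2.mul hc)
    have heq0 : (fun τ => -(z τ).1 * Real.sin (ϑ τ) + (z τ).2 * Real.cos (ϑ τ))
        =ᶠ[nhds t] fun _ => (0:ℝ) := by
      filter_upwards [Icc_mem_nhds htO.1 htO.2] with τ hτ
      rw [hpolar τ hτ]
      simp only [Prod.smul_fst, Prod.smul_snd, smul_eq_mul]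
      ring
    have hD0 : (-(z' t).1 * Real.sin (ϑ t) + -(z t).1 * (Real.cos (ϑ t) * ϑ' t)) +
          ((z' t).2 * Real.cos (ϑ t) + (z t).2 * (-Real.sin (ϑ t) * ϑ' t)) = 0 :=
      hg.unique ((hasDerivAt_const t (0:ℝ)).congr_of_eventuallyEq heq0)
    have pyth := Real.sin_sq_add_cos_sq (ϑ t)
    have hkey : -(z' t).1 * Real.sin (ϑ t) + (z' t).2 * Real.cos (ϑ t) = ϑ' t * ρ t := by
      rw [P1, P2] at hD0
      linear_combination hD0 + ρ t * ϑ' t * pyth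
    -- the ODE, componentwise
    have e := hode t htI
    simp only [J2, grad2, Prod.smul_mk, Prod.mk_add_mk, Prod.mk.injEq, smul_eq_mul] at e
    obtain ⟨e1, e2⟩ := e
    -- Euler identities
    have hdecomp : z t = (z t).1 • ((1:ℝ), (0:ℝ)) + (z t).2 • ((0:ℝ), (1:ℝ)) := by
      ext <;> simp
    have E1 : (z t).1 * fderiv ℝ V₁ (z t) (1, 0) + (z t).2 * fderiv ℝ V₁ (z t) (0, 1)
        = 2 * V₁ (z t) := by
      have h := euler2 hV₁ hhom₁ hzne
      nth_rewrite 2 [hdecomp] at h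
      rw [map_add, map_smul, map_smul, smul_eq_mul, smul_eq_mul] at h
      exact h
    have E2 : (z t).1 * fderiv ℝ V₂ (z t) (1, 0) + (z t).2 * fderiv ℝ V₂ (z t) (0, 1)
        = 2 * V₂ (z t) := by
      have h := euler2 hV₂ hhom₂ hzne
      nth_rewrite 2 [hdecomp] at h
      rw [map_add, map_smul, map_smul, smul_eq_mul, smul_eq_mul] at h
      exact h
    -- homogeneity
    have Hv1 : V₁ (z t) = ρ t ^ 2 * V₁ (u t) := by
      rw [hpolar t htI]; exact hhom₁ (ρ t) hr _ (cs_ne_zero _)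
    have Hv2 : V₂ (z t) = ρ t ^ 2 * V₂ (u t) := by
      rw [hpolar t htI]; exact hhom₂ (ρ t) hr _ (cs_ne_zero _)
    -- combine
    have hA : -(z' t).2 * (z t).1 + (z' t).1 * (z t).2
        = 2 * ρ t ^ 2 * ((1 - γ t (z t)) * V₁ (u t) + γ t (z t) * V₂ (u t)) := by
      linear_combination (z t).1 * e1 + (z t).2 * e2 + (1 - γ t (z t)) * E1
        + γ t (z t) * E2 + 2 * (1 - γ t (z t)) * Hv1 + 2 * γ t (z t) * Hv2
    have hB : -(z' t).2 * (z t).1 + (z' t).1 * (z t).2 = -(ϑ' t) * ρ t ^ 2 := by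
      rw [P1, P2]
      linear_combination (-(ρ t)) * hkey
    have hcancel : (ϑ' t + 2 * ((1 - γ t (z t)) * V₁ (u t) + γ t (z t) * V₂ (u t))) * ρ t ^ 2
        = 0 := by linear_combination hB - hA
    rcases mul_eq_zero.1 hcancel with h | h
    · linarith
    · exact absurd h (pow_ne_zero 2 hr.ne')
  -- positivity of V on the unit circle
  have h2V₁ : ∀ a : ℝ, 0 < 2 * V₁ (Real.cos a, Real.sin a) := fun a => by
    have := hpos₁ _ (cs_ne_zero a); linarith
  have h2V₂ : ∀ a : ℝ, 0 < 2 * V₂ (Real.cos a, Real.sin a) := fun a => by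
    have := hpos₂ _ (cs_ne_zero a); linarith
  -- bounds on ϑ'
  have bnd : ∀ t ∈ Ioo t₀ t₁,
      -(2 * V₂ (u t)) ≤ ϑ' t ∧ ϑ' t ≤ -(2 * V₁ (u t)) := by
    intro t htO
    have hk := key t htO
    have ha := hγ t (z t)
    have hl := hle (u t)
    constructor <;> [skip; skip] <;> rw [hk] <;> nlinarith [ha.1, ha.2, hl]
  -- continuity of the integrands
  have hcont₁ : Continuous fun a : ℝ => 1 / (2 * V₁ (Real.cos a, Real.sin a)) := by
    apply Continuous.div continuous_const
    · exact continuous_const.mul (hV₁.continuous.comp (Real.continuous_cos.prodMk Real.continuous_sin))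
    · exact fun a => (h2V₁ a).ne'
  have hcont₂ : Continuous fun a : ℝ => 1 / (2 * V₂ (Real.cos a, Real.sin a)) := by
    apply Continuous.div continuous_const
    · exact continuous_const.mul (hV₂.continuous.comp (Real.continuous_cos.prodMk Real.continuous_sin))
    · exact fun a => (h2V₂ a).ne'
  -- the primitive functions
  set f₁ : ℝ → ℝ := fun a => 1 / (2 * V₁ (Real.cos a, Real.sin a)) with hf₁
  set f₂ : ℝ → ℝ := fun a => 1 / (2 * V₂ (Real.cos a, Real.sin a)) with hf₂
  set G₁ : ℝ → ℝ := fun x => ∫ a in θ₀..x, f₁ a with hG₁def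
  set G₂ : ℝ → ℝ := fun x => ∫ a in θ₀..x, f₂ a with hG₂def
  have hG₁ : ∀ x, HasDerivAt G₁ (f₁ x) x := fun x =>
    (hcont₁.integral_hasStrictDerivAt θ₀ x).hasDerivAt
  have hG₂ : ∀ x, HasDerivAt G₂ (f₂ x) x := fun x =>
    (hcont₂.integral_hasStrictDerivAt θ₀ x).hasDerivAt
  have hϑcont : ContinuousOn ϑ (Icc t₀ t₁) := fun t htI =>
    (hϑ t htI).continuousAt.continuousWithinAt
  have hInt : interior (Icc t₀ t₁) = Ioo t₀ t₁ := interior_Icc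
  -- monotone comparison functions
  have hmemt₀ : t₀ ∈ Icc t₀ t₁ := left_mem_Icc.2 ht.le
  have hmemt₁ : t₁ ∈ Icc t₀ t₁ := right_mem_Icc.2 ht.le
  constructor
  · -- lower bound: H t = t - t₀ + G₂ (ϑ t) is monotone
    have hmono : MonotoneOn (fun t => t - t₀ + G₂ (ϑ t)) (Icc t₀ t₁) := by
      apply monotoneOn_of_hasDerivWithinAt_nonneg (convex_Icc t₀ t₁)
        (f' := fun t => 1 + f₂ (ϑ t) * ϑ' t)
      · exact ((continuous_id.sub continuous_const).continuousOn).add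
          ((continuous_iff_continuousAt.2 fun x => (hG₂ x).continuousAt).comp_continuousOn hϑcont)
      · intro t htO
        rw [hInt] at htO ⊢
        exact (((hasDerivAt_id t).sub_const t₀).add
          ((hG₂ (ϑ t)).comp t (hϑ t (Ioo_subset_Icc_self htO)))).hasDerivWithinAt
      · intro t htO
        rw [hInt] at htO
        have hb := (bnd t htO).1
        have hfpos := h2V₂ (ϑ t)
        have hmul : f₂ (ϑ t) * (-(2 * V₂ (u t))) ≤ f₂ (ϑ t) * ϑ' t :=
          mul_le_mul_of_nonneg_left hb (by positivity)
        have hval : f₂ (ϑ t) * (-(2 * V₂ (u t))) = -1 := by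
          rw [hf₂]; field_simp [hu]
          rw [show V₂ (u t) = V₂ (Real.cos (ϑ t), Real.sin (ϑ t)) from rfl, div_self (by linarith)]
        linarith
    have h01 : t₀ - t₀ + G₂ (ϑ t₀) ≤ t₁ - t₀ + G₂ (ϑ t₁) := hmono hmemt₀ hmemt₁ ht.le
    have hG₂θ₀ : G₂ θ₀ = 0 := by rw [hG₂def]; simp
    rw [hθ₀, hθ₁, hG₂θ₀] at h01
    have hsymm : (∫ a in θ₁..θ₀, f₂ a) = -G₂ θ₁ := intervalIntegral.integral_symm θ₀ θ₁
    rw [hsymm]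
    linarith
  · -- upper bound: K t = t - t₀ + G₁ (ϑ t) is antitone
    have hanti : AntitoneOn (fun t => t - t₀ + G₁ (ϑ t)) (Icc t₀ t₁) := by
      apply antitoneOn_of_hasDerivWithinAt_nonpos (convex_Icc t₀ t₁)
        (f' := fun t => 1 + f₁ (ϑ t) * ϑ' t)
      · exact ((continuous_id.sub continuous_const).continuousOn).add
          ((continuous_iff_continuousAt.2 fun x => (hG₁ x).continuousAt).comp_continuousOn hϑcont)
      · intro t htO
        rw [hInt] at htO ⊢
        exact (((hasDerivAt_id t).sub_const t₀).add
          ((hG₁ (ϑ t)).comp t (hϑ t (Ioo_subset_Icc_self htO)))).hasDerivWithinAt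
      · intro t htO
        rw [hInt] at htO
        have hb := (bnd t htO).2
        have hfpos := h2V₁ (ϑ t)
        have hmul : f₁ (ϑ t) * ϑ' t ≤ f₁ (ϑ t) * (-(2 * V₁ (u t))) :=
          mul_le_mul_of_nonneg_left hb (by positivity)
        have hval : f₁ (ϑ t) * (-(2 * V₁ (u t))) = -1 := by
          rw [hf₁]; field_simp [hu]
          rw [show V₁ (u t) = V₁ (Real.cos (ϑ t), Real.sin (ϑ t)) from rfl, div_self (by linarith)]
        linarith
    have h01 : t₁ - t₀ + G₁ (ϑ t₁) ≤ t₀ - t₀ + G₁ (ϑ t₀) := hanti hmemt₀ hmemt₁ ht.le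
    have hG₁θ₀ : G₁ θ₀ = 0 := by rw [hG₁def]; simp
    rw [hθ₀, hθ₁, hG₁θ₀] at h01
    have hsymm : (∫ a in θ₁..θ₀, f₁ a) = -G₁ θ₁ := intervalIntegral.integral_symm θ₀ θ₁
    rw [hsymm]
    linarith
end
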